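/- Under the hypotheses of the split-minimization rate theorem, assume in addition: ψ is strictly increasing with inverse ψ⁻¹ on its range; ψ(t) ≥ c_ψ·t for all t > 0; Δ_ξ(x̌, x†) ≥ c_s·‖x̌ − x†‖^s for all x̌ ∈ X̌ for some s ≥ 1, c_s > 0; and C̄_Q·Q(r̂₁, r̂₂)^p ≥ max{‖(I−P)(r⁻¹(r̂₂)) − (I−P)(r⁻¹(r̂₁))‖^s, c_ψ·C_P·‖P(r⁻¹(r̂₂)) − P(r⁻¹(r̂₁))‖^p} for all r̂₁, r̂₂ ∈ X̃. Let ω := (−ψ)*(−1/(2C̄α)) with C̄ := 2^{2p−2}·C_ψ. Then there are constants C, C' > 0 depending only on p, s, b, γ, c_s, c_ψ, C_ψ, C_P, C̃_Q, C̄_Q, C_η, τ̲, τ̄, β such that, whenever C·ω lies in the range of ψ, the split-minimization pair satisfies ‖x_sm − x†‖ ≤ C'·(ω^{1/s} + ω^{1/p} + ψ⁻¹(C·ω)^{1/p}). -/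

import Mathlib

/-- The convex conjugate of `-ψ`: `(-ψ)*(s) = sup_{t ≥ 0} (s·t + ψ(t)) ∈ [0,∞]`. -/
noncomputable def negConj (ψ : ℝ → ℝ) (s : ℝ) : EReal :=
  ⨆ t : {t : ℝ // 0 ≤ t}, ((s * t.1 + ψ t.1 : ℝ) : EReal)


private lemma aux_two_rpow {a c p : ℝ} (ha : 0 ≤ a) (hc : 0 ≤ c) (hp : 1 ≤ p) :
    (a + c) ^ p ≤ (2 : ℝ) ^ (p - 1) * (a ^ p + c ^ p) := by
  have h := NNReal.rpow_add_le_mul_rpow_add_rpow (⟨a, ha⟩ : NNReal) ⟨c, hc⟩ hp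
  exact_mod_cast h

private lemma aux_rpow_le {a M q : ℝ} (ha : 0 ≤ a) (hq : 1 ≤ q) (h : a ^ q ≤ M) :
    a ≤ M ^ (1 / q) := by
  have hq0 : q ≠ 0 := by positivity
  have ha' : 0 ≤ a ^ q := Real.rpow_nonneg ha q
  calc a = (a ^ q) ^ (1 / q) := by
        rw [← Real.rpow_mul ha, mul_one_div_cancel hq0, Real.rpow_one]
    _ ≤ M ^ (1 / q) := Real.rpow_le_rpow ha' h (by positivity)

universe u v w

set_option maxHeartbeats 1000000 in
/-- Convergence rate of the split minimization reconstruction `x_sm` to `x†`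
(Corollary 2.6): with `ω = (−ψ)*(−1/(2C̄α))`, whenever `C·ω` lies in the range of `ψ`,
`‖x_sm − x†‖ ≤ C'·(ω^{1/s} + ω^{1/p} + ψ⁻¹(C·ω)^{1/p})`, with constants depending only
on `p, s, b, γ, c_s, c_ψ, C_ψ, C_P, C̃_Q, C̄_Q, C_η, τ̲, τ̄, β`. -/
theorem stmt_9 (p s b γ cs cψ Cψ CP CtQ CbarQ Cη τl τu β Cb : ℝ)
    (hp : 1 ≤ p) (hs : 1 ≤ s) (hb0 : 0 < b) (hb1 : b < 1)
    (hcs : 0 < cs) (hcψ : 0 < cψ) (hCψ : 1 ≤ Cψ) (hγ : Cψ < γ)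
    (hCtQ : 0 < CtQ) (hCbarQ : 0 < CbarQ) (hCη : 0 < Cη)
    (hτl : 0 < τl) (hτlu : τl ≤ τu) (hβ : 0 < β)
    (hCb : Cb = (2 : ℝ) ^ (2 * p - 2) * Cψ) :
    ∃ C C' : ℝ, 0 < C ∧ 0 < C' ∧
      ∀ {X : Type u} {Xt : Type v} {Y : Type w}
      [NormedAddCommGroup X] [NormedSpace ℝ X]
      [NormedAddCommGroup Xt] [NormedSpace ℝ Xt]
      [NormedAddCommGroup Y] [NormedSpace ℝ Y]
    
    (Xc : Submodule ℝ X) (U : Set X) (x0 xd : X)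
    (hx0U : x0 ∈ U) (hx0c : x0 ∈ Xc) (hxdU : xd ∈ U) (hxdc : xd ∈ Xc)
    (F : X → Y) (K : Xt →L[ℝ] Y)
    (r : X → Xt) (rinv : Xt → X)
    (hrleft : ∀ x ∈ U, rinv (r x) = x)
    (hrmem : ∀ v : Xt, rinv v ∈ U) (hrright : ∀ v : Xt, r (rinv v) = v)
    (Lr : ℝ) (hLr : ∀ x1 ∈ U, ∀ x2 ∈ U, ‖r x1 - r x2‖ ≤ Lr * ‖x1 - x2‖)
    (hRI : ∀ x ∈ U, F x - F x0 = K (r x))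
    (P Ip : X → X) (hPIp : ∀ x, P x = x - Ip x)
    (hIpXc : ∀ x, Ip x ∈ Xc)
    (hPxd : P xd = 0) (hPx0 : P x0 = 0)
    (hIprinvU : ∀ v : Xt, Ip (rinv v) ∈ U)
    (δ : ℝ) (hδ : 0 < δ) (yδ : Y) (hnoise : ‖F xd - yδ‖ ≤ δ)
    (Rc : X → ℝ) (hRcnn : ∀ x, 0 ≤ Rc x)
    (ξ : X →L[ℝ] ℝ) (hξ : ∀ xc ∈ Xc, ξ (xc - xd) ≤ Rc xc - Rc xd)
    (ψ : ℝ → ℝ) (hψcont : ContinuousOn ψ (Set.Ici (0 : ℝ)))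
    (hψmono : MonotoneOn ψ (Set.Ici (0 : ℝ)))
    (hψ0 : ψ 0 = 0) (hψnn : ∀ t : ℝ, 0 ≤ t → 0 ≤ ψ t)
    (hVSC : ∀ xc, xc ∈ Xc → xc ∈ U →
      -(ξ (xc - xd)) ≤ b * (Rc xc - Rc xd - ξ (xc - xd)) + ψ (‖K (r xc - r xd)‖ ^ p))
      (hψstrict : StrictMonoOn ψ (Set.Ici (0 : ℝ)))
      (hψlow : ∀ t : ℝ, 0 < t → cψ * t ≤ ψ t)
      (hψsub : ∀ a c : ℝ, 0 ≤ a → 0 ≤ c → ψ (a + c) ≤ Cψ * (ψ a + ψ c))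
      (hsconv : ∀ xc ∈ Xc, cs * ‖xc - xd‖ ^ s ≤ Rc xc - Rc xd - ξ (xc - xd))
      (Q : Xt → Xt → ℝ) (hQnn : ∀ v1 v2, 0 ≤ Q v1 v2) (hQdiag : ∀ v, Q v v = 0)
      (RP : X → ℝ) (hRP0 : RP 0 = 0) (hRPnn : ∀ v, 0 ≤ RP v)
      (hCP : (2 : ℝ) ^ (p - 1) * ‖K‖ ^ p * Lr ^ p ≤ CP)
      (hRPlb : ∀ v : X, γ * ψ (CP * ‖v‖ ^ p) ≤ RP v)
      (hQt : ∀ v : Xt, Q (r xd) v ^ p ≤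
        CtQ * ((Rc (Ip (rinv v)) - Rc xd - ξ (Ip (rinv v) - xd)) +
          ψ (CP * ‖P (rinv v)‖ ^ p)))
      (hQbar1 : ∀ v1 v2 : Xt,
        ‖Ip (rinv v2) - Ip (rinv v1)‖ ^ s ≤ CbarQ * Q v1 v2 ^ p)
      (hQbar2 : ∀ v1 v2 : Xt,
        cψ * CP * ‖P (rinv v2) - P (rinv v1)‖ ^ p ≤ CbarQ * Q v1 v2 ^ p)
      (α η : ℝ) (hα : 0 < α) (hαβ : α ≤ β)
      (hη0 : 0 ≤ η) (hη : η ≤ Cη * δ ^ p)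
      (hfin : negConj ψ (-(1 / (Cb * α))) ≠ ⊤)
      (hpar1 : ((τl * δ ^ p : ℝ) : EReal) ≤ (α : ℝ) * negConj ψ (-(1 / (2 * Cb * α))))
      (hpar2 : ((α : ℝ) : EReal) * negConj ψ (-(1 / (2 * Cb * α))) ≤ ((τu * δ ^ p : ℝ) : EReal))
      (Jα : Xt → ℝ)
      (hJα : ∀ v, Jα v = ‖K v + F x0 - yδ‖ ^ p +
        α * (Rc (Ip (rinv v)) + RP (P (rinv v))))
      (Jβ : Xt → X → ℝ)
      (hJβ : ∀ v x, Jβ v x = β * Q (r x) v ^ p + ‖P x‖ ^ p)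
      (rsm : Xt) (xsm : X) (_ : xsm ∈ U)
      (hmin1 : ∀ v : Xt, Jα rsm ≤ Jα v + η)
      (hmin2 : ∀ x ∈ U, Jβ rsm xsm ≤ Jβ rsm x + η)
      (t : ℝ), 0 ≤ t →
      ψ t = C * (negConj ψ (-(1 / (2 * Cb * α)))).toReal →
      ‖xsm - xd‖ ≤ C' * ((negConj ψ (-(1 / (2 * Cb * α)))).toReal ^ (1 / s) +
        (negConj ψ (-(1 / (2 * Cb * α)))).toReal ^ (1 / p) + t ^ (1 / p)) := by
  have hp0 : (0:ℝ) < p := by linarith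
  have hs0 : (0:ℝ) < s := by linarith
  have hCψ0 : (0:ℝ) < Cψ := by linarith
  have hγψ : (0:ℝ) < γ - Cψ := by linarith
  have h1b : (0:ℝ) < 1 - b := by linarith
  set K1 : ℝ := (3/2 + Cη)/τl + Cψ with hK1def
  set K2 : ℝ := K1 / (1 - b) with hK2def
  set K3 : ℝ := K1 / (γ - Cψ) with hK3def
  set K6 : ℝ := CtQ * (K2 + K3) + Cη / τl with hK6def
  have hK1 : 0 < K1 := by
    have h := div_pos (by linarith : (0:ℝ) < 3/2 + Cη) hτl
    rw [hK1def]; linarith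
  have hK2 : 0 < K2 := div_pos hK1 h1b
  have hK3 : 0 < K3 := div_pos hK1 hγψ
  have hK6 : 0 < K6 := add_pos (mul_pos hCtQ (add_pos hK2 hK3)) (div_pos hCη hτl)
  refine ⟨1, (K2/cs) ^ (1/s) + (CbarQ*K6) ^ (1/s) + (β*K6) ^ (1/p), one_pos, ?_, ?_⟩
  · have h1 := Real.rpow_pos_of_pos (div_pos hK2 hcs) (1/s)
    have h2 := Real.rpow_pos_of_pos (mul_pos hCbarQ hK6) (1/s)
    have h3 := Real.rpow_pos_of_pos (mul_pos hβ hK6) (1/p)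
    linarith
  intro X Xt Y _ _ _ _ _ _ Xc U x0 xd hx0U hx0c hxdU hxdc F K r rinv hrleft hrmem hrright
    Lr hLr hRI P Ip hPIp hIpXc hPxd hPx0 hIprinvU δ hδ yδ hnoise Rc hRcnn ξ hξ ψ hψcont
    hψmono hψ0 hψnn hVSC hψstrict hψlow hψsub hsconv Q hQnn hQdiag RP hRP0 hRPnn hCP
    hRPlb hQt hQbar1 hQbar2 α η hα hαβ hη0 hη hfin hpar1 hpar2 Jα hJα Jβ hJβ rsm xsm
    hxsmU hmin1 hmin2 t ht hCt
  clear hCt hfin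
  set W := negConj ψ (-(1 / (2 * Cb * α))) with hWdef
  have hE : (0:ℝ) < (2:ℝ) ^ (2*p - 2) := Real.rpow_pos_of_pos two_pos _
  have hCb0 : 0 < Cb := by rw [hCb]; exact mul_pos hE hCψ0
  -- basic facts about W and ω
  have hW0 : (0:EReal) ≤ W := by
    have h := le_iSup (fun t : {t : ℝ // 0 ≤ t} =>
      (((-(1 / (2 * Cb * α))) * t.1 + ψ t.1 : ℝ) : EReal)) ⟨0, le_refl 0⟩
    rw [show (⨆ t : {t : ℝ // 0 ≤ t},
        (((-(1 / (2 * Cb * α))) * t.1 + ψ t.1 : ℝ) : EReal)) = W from rfl] at h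
    simpa [hψ0] using h
  have hWtop : W ≠ ⊤ := by
    intro h
    rw [h, EReal.mul_top_of_pos (by exact_mod_cast hα)] at hpar2
    exact (EReal.coe_lt_top _).not_ge hpar2
  have hWbot : W ≠ ⊥ := fun h => by simp [h] at hW0
  have hWcoe : ((W.toReal : ℝ) : EReal) = W := EReal.coe_toReal hWtop hWbot
  set ω := W.toReal with hωdef
  have hω0 : 0 ≤ ω := by
    have h : ((0:ℝ) : EReal) ≤ ((ω : ℝ) : EReal) := by rw [hWcoe]; simpa using hW0
    exact EReal.coe_le_coe_iff.mp h
  have hpar1' : τl * δ ^ p ≤ α * ω := by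
    rw [← hWcoe, ← EReal.coe_mul] at hpar1
    exact EReal.coe_le_coe_iff.mp hpar1
  have hδp0 : (0:ℝ) ≤ δ ^ p := Real.rpow_nonneg hδ.le p
  have hδp : δ ^ p ≤ α * ω / τl := (le_div_iff₀ hτl).mpr (by linarith)
  have hFen : ∀ T : ℝ, 0 ≤ T → ψ T ≤ 1/(2*Cb*α) * T + ω := by
    intro T hT
    have h := le_iSup (fun t : {t : ℝ // 0 ≤ t} =>
      (((-(1 / (2 * Cb * α))) * t.1 + ψ t.1 : ℝ) : EReal)) ⟨T, hT⟩
    rw [show (⨆ t : {t : ℝ // 0 ≤ t},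
        (((-(1 / (2 * Cb * α))) * t.1 + ψ t.1 : ℝ) : EReal)) = W from rfl, ← hWcoe] at h
    have := EReal.coe_le_coe_iff.mp h
    linarith
  -- degenerate case
  rcases lt_or_ge Lr 0 with hLrneg | hLr0
  · have hxx : xsm = xd := by
      by_contra hne
      have h1 := hLr xsm hxsmU xd hxdU
      have h2 : 0 < ‖xsm - xd‖ := norm_sub_pos_iff.mpr hne
      have h3 := mul_pos (neg_pos.mpr hLrneg) h2
      have h4 := norm_nonneg (r xsm - r xd)
      nlinarith
    rw [hxx, sub_self, norm_zero]
    have n1 := Real.rpow_nonneg hω0 (1/s)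
    have n2 := Real.rpow_nonneg hω0 (1/p)
    have n3 := Real.rpow_nonneg ht (1/p)
    have c1 := Real.rpow_pos_of_pos (div_pos hK2 hcs) (1/s)
    have c2 := Real.rpow_pos_of_pos (mul_pos hCbarQ hK6) (1/s)
    have c3 := Real.rpow_pos_of_pos (mul_pos hβ hK6) (1/p)
    have h4 : (0:ℝ) ≤ ω ^ (1/s) + ω ^ (1/p) + t ^ (1/p) := by linarith
    exact mul_nonneg (by linarith) h4
  -- main case
  have hCP0 : (0:ℝ) ≤ CP :=
    le_trans (mul_nonneg (mul_nonneg (Real.rpow_nonneg two_pos.le _)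
      (Real.rpow_nonneg (norm_nonneg K) p)) (Real.rpow_nonneg hLr0 p)) hCP
  have huU : rinv rsm ∈ U := hrmem rsm
  have hxcXc : Ip (rinv rsm) ∈ Xc := hIpXc (rinv rsm)
  have hxcU : Ip (rinv rsm) ∈ U := hIprinvU rsm
  have hIpxd : Ip xd = xd := by
    have h : xd - Ip xd = 0 := by rw [← hPIp xd, hPxd]
    exact (sub_eq_zero.mp h).symm
  have hrxd : rinv (r xd) = xd := hrleft xd hxdU
  have hKrxd : K (r xd) = F xd - F x0 := (hRI xd hxdU).symm
  set d : ℝ := ‖K rsm + F x0 - yδ‖ with hddef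
  have hd0 : 0 ≤ d := norm_nonneg _
  have hdp0 : (0:ℝ) ≤ d ^ p := Real.rpow_nonneg hd0 p
  -- step: comparison of Jα at r xd
  have hstep2 : d ^ p + α * (Rc (Ip (rinv rsm)) + RP (P (rinv rsm)))
      ≤ δ ^ p + α * Rc xd + η := by
    have h := hmin1 (r xd)
    rw [hJα rsm, hJα (r xd), hrxd, hIpxd, hPxd, hRP0] at h
    have heq : K (r xd) + F x0 - yδ = F xd - yδ := by rw [hKrxd]; abel
    rw [heq] at h
    have hδle : ‖F xd - yδ‖ ^ p ≤ δ ^ p :=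
      Real.rpow_le_rpow (norm_nonneg _) hnoise hp0.le
    rw [← hddef] at h
    linarith
  -- variational source condition pieces
  have hΔ0 : 0 ≤ Rc (Ip (rinv rsm)) - Rc xd - ξ (Ip (rinv rsm) - xd) := by
    have := hξ (Ip (rinv rsm)) hxcXc; linarith
  have hVSC' := hVSC (Ip (rinv rsm)) hxcXc hxcU
  have hRclb : (1 - b) * (Rc (Ip (rinv rsm)) - Rc xd - ξ (Ip (rinv rsm) - xd))
      - ψ (‖K (r (Ip (rinv rsm)) - r xd)‖ ^ p) ≤ Rc (Ip (rinv rsm)) - Rc xd := by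
    linarith
  have hxcu : ‖Ip (rinv rsm) - rinv rsm‖ = ‖P (rinv rsm)‖ := by
    rw [hPIp (rinv rsm), norm_sub_rev]
  set B : ℝ := ‖P (rinv rsm)‖ with hBdef
  have hB0 : 0 ≤ B := norm_nonneg _
  have hBp0 : (0:ℝ) ≤ B ^ p := Real.rpow_nonneg hB0 p
  have hCPB0 : (0:ℝ) ≤ CP * B ^ p := mul_nonneg hCP0 hBp0
  have hT0 : (0:ℝ) ≤ (2:ℝ) ^ (2*p-2) * (d ^ p + δ ^ p) :=
    mul_nonneg hE.le (by linarith)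
  have hA : ‖K (r (Ip (rinv rsm)) - r xd)‖ ^ p
      ≤ (2:ℝ) ^ (2*p-2) * (d ^ p + δ ^ p) + CP * B ^ p := by
    have h1 : ‖K rsm - K (r xd)‖ ≤ d + δ := by
      have heq : K rsm - K (r xd) = (K rsm + F x0 - yδ) - (F xd - yδ) := by
        rw [hKrxd]; abel
      rw [heq]
      have := norm_sub_le (K rsm + F x0 - yδ) (F xd - yδ)
      rw [← hddef] at this
      linarith
    have h2 : ‖K (r (Ip (rinv rsm))) - K rsm‖ ≤ ‖K‖ * (Lr * B) := by
      calc ‖K (r (Ip (rinv rsm))) - K rsm‖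
          = ‖K (r (Ip (rinv rsm)) - r (rinv rsm))‖ := by rw [map_sub, hrright rsm]
        _ ≤ ‖K‖ * ‖r (Ip (rinv rsm)) - r (rinv rsm)‖ := K.le_opNorm _
        _ ≤ ‖K‖ * (Lr * ‖Ip (rinv rsm) - rinv rsm‖) :=
            mul_le_mul_of_nonneg_left (hLr _ hxcU _ huU) (norm_nonneg (K : Xt →L[ℝ] Y))
        _ = ‖K‖ * (Lr * B) := by rw [hxcu]
    have h3 : ‖K (r (Ip (rinv rsm)) - r xd)‖ ≤ (d + δ) + ‖K‖ * (Lr * B) := by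
      have heq : K (r (Ip (rinv rsm)) - r xd)
          = (K (r (Ip (rinv rsm))) - K rsm) + (K rsm - K (r xd)) := by
        rw [map_sub]; abel
      rw [heq]
      have := norm_add_le (K (r (Ip (rinv rsm))) - K rsm) (K rsm - K (r xd))
      linarith
    have hM0 : (0:ℝ) ≤ ‖K‖ * (Lr * B) :=
      mul_nonneg (norm_nonneg _) (mul_nonneg hLr0 hB0)
    have h4 : ‖K (r (Ip (rinv rsm)) - r xd)‖ ^ p ≤ ((d + δ) + ‖K‖ * (Lr * B)) ^ p :=
      Real.rpow_le_rpow (norm_nonneg _) h3 hp0.le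
    have h5 := aux_two_rpow (add_nonneg hd0 hδ.le) hM0 hp
    have h6 := aux_two_rpow hd0 hδ.le hp
    have h7 : (‖K‖ * (Lr * B)) ^ p = ‖K‖ ^ p * Lr ^ p * B ^ p := by
      rw [Real.mul_rpow (norm_nonneg _) (mul_nonneg hLr0 hB0),
        Real.mul_rpow hLr0 hB0]; ring
    have hEE : (2:ℝ) ^ (p-1) * (2:ℝ) ^ (p-1) = (2:ℝ) ^ (2*p-2) := by
      rw [← Real.rpow_add two_pos]; ring_nf
    have hE1 : (0:ℝ) < (2:ℝ) ^ (p-1) := Real.rpow_pos_of_pos two_pos _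
    have h8 : (2:ℝ) ^ (p-1) * ((d + δ) ^ p) ≤ (2:ℝ) ^ (p-1) * ((2:ℝ) ^ (p-1) * (d^p + δ^p)) :=
      mul_le_mul_of_nonneg_left h6 hE1.le
    have h8' : (2:ℝ) ^ (p-1) * ((2:ℝ) ^ (p-1) * (d^p + δ^p)) = (2:ℝ) ^ (2*p-2) * (d^p + δ^p) := by
      rw [← hEE]; ring
    have h9 : (2:ℝ) ^ (p-1) * (‖K‖ ^ p * Lr ^ p * B ^ p) ≤ CP * B ^ p := by
      have h9a := mul_le_mul_of_nonneg_right hCP hBp0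
      linarith
    have h7' : (2:ℝ) ^ (p-1) * ((‖K‖ * (Lr * B)) ^ p)
        = (2:ℝ) ^ (p-1) * (‖K‖ ^ p * Lr ^ p * B ^ p) := by rw [h7]
    linarith [h4, h5, h7', h8, h8', h9]
  -- apply ψ
  have hA0 : (0:ℝ) ≤ ‖K (r (Ip (rinv rsm)) - r xd)‖ ^ p := Real.rpow_nonneg (norm_nonneg _) p
  have hψA : ψ (‖K (r (Ip (rinv rsm)) - r xd)‖ ^ p)
      ≤ Cψ * (ψ ((2:ℝ) ^ (2*p-2) * (d ^ p + δ ^ p)) + ψ (CP * B ^ p)) := by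
    have hmono := hψmono (Set.mem_Ici.mpr hA0)
      (Set.mem_Ici.mpr (add_nonneg hT0 hCPB0)) hA
    exact hmono.trans (hψsub _ _ hT0 hCPB0)
  have hΨP0 : 0 ≤ ψ (CP * B ^ p) := hψnn _ hCPB0
  have hΨT := hFen ((2:ℝ) ^ (2*p-2) * (d ^ p + δ ^ p)) hT0
  have hRPb : γ * ψ (CP * B ^ p) ≤ RP (P (rinv rsm)) := hRPlb (P (rinv rsm))
  -- combination
  have m1 : α * ((1 - b) * (Rc (Ip (rinv rsm)) - Rc xd - ξ (Ip (rinv rsm) - xd))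
        - ψ (‖K (r (Ip (rinv rsm)) - r xd)‖ ^ p) + γ * ψ (CP * B ^ p))
      ≤ α * ((Rc (Ip (rinv rsm)) - Rc xd) + RP (P (rinv rsm))) :=
    mul_le_mul_of_nonneg_left (by linarith) hα.le
  have m2 : α * ψ (‖K (r (Ip (rinv rsm)) - r xd)‖ ^ p)
      ≤ α * (Cψ * (ψ ((2:ℝ) ^ (2*p-2) * (d ^ p + δ ^ p)) + ψ (CP * B ^ p))) :=
    mul_le_mul_of_nonneg_left hψA hα.le
  have m3 : (α * Cψ) * ψ ((2:ℝ) ^ (2*p-2) * (d ^ p + δ ^ p))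
      ≤ (α * Cψ) * (1/(2*Cb*α) * ((2:ℝ) ^ (2*p-2) * (d ^ p + δ ^ p)) + ω) :=
    mul_le_mul_of_nonneg_left hΨT (mul_nonneg hα.le hCψ0.le)
  have m4 : (α * Cψ) * (1/(2*Cb*α) * ((2:ℝ) ^ (2*p-2) * (d ^ p + δ ^ p)))
      = (d ^ p + δ ^ p) / 2 := by
    rw [hCb]
    field_simp
  have Hmain : α * ((1 - b) * (Rc (Ip (rinv rsm)) - Rc xd - ξ (Ip (rinv rsm) - xd)))
      + α * ((γ - Cψ) * ψ (CP * B ^ p)) ≤ (3/2) * δ ^ p + η + α * (Cψ * ω) := by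
    have e1 : α * ((Rc (Ip (rinv rsm)) - Rc xd) + RP (P (rinv rsm)))
        = α * (Rc (Ip (rinv rsm)) + RP (P (rinv rsm))) - α * Rc xd := by ring
    linarith [hstep2, m1, m2, m3, m4, hdp0, e1]
  have m5 : (3/2 + Cη) * δ ^ p ≤ (3/2 + Cη) * (α * ω / τl) :=
    mul_le_mul_of_nonneg_left hδp (by linarith)
  have hexp : α * (K1 * ω) = (3/2 + Cη) * (α * ω / τl) + α * (Cψ * ω) := by
    rw [hK1def]; field_simp
  have HK1 : α * ((1 - b) * (Rc (Ip (rinv rsm)) - Rc xd - ξ (Ip (rinv rsm) - xd)))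
      + α * ((γ - Cψ) * ψ (CP * B ^ p)) ≤ α * (K1 * ω) := by
    rw [hexp]
    linarith [Hmain, m5, hη]
  have hΔK : Rc (Ip (rinv rsm)) - Rc xd - ξ (Ip (rinv rsm) - xd) ≤ K2 * ω := by
    have hnn : 0 ≤ α * ((γ - Cψ) * ψ (CP * B ^ p)) :=
      mul_nonneg hα.le (mul_nonneg hγψ.le hΨP0)
    have h1 : α * ((1 - b) * (Rc (Ip (rinv rsm)) - Rc xd - ξ (Ip (rinv rsm) - xd)))
        ≤ α * (K1 * ω) := by linarith
    have h2 : (1 - b) * (Rc (Ip (rinv rsm)) - Rc xd - ξ (Ip (rinv rsm) - xd)) ≤ K1 * ω :=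
      (mul_le_mul_iff_of_pos_left hα).mp h1
    rw [hK2def]
    rw [div_mul_eq_mul_div, le_div_iff₀ h1b]
    linarith
  have hΨK : ψ (CP * B ^ p) ≤ K3 * ω := by
    have hnn : 0 ≤ α * ((1 - b) * (Rc (Ip (rinv rsm)) - Rc xd - ξ (Ip (rinv rsm) - xd))) :=
      mul_nonneg hα.le (mul_nonneg h1b.le hΔ0)
    have h1 : α * ((γ - Cψ) * ψ (CP * B ^ p)) ≤ α * (K1 * ω) := by linarith
    have h2 : (γ - Cψ) * ψ (CP * B ^ p) ≤ K1 * ω := (mul_le_mul_iff_of_pos_left hα).mp h1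
    rw [hK3def, div_mul_eq_mul_div, le_div_iff₀ hγψ]
    linarith
  -- bound on Q (r xd) rsm
  have hQxd : Q (r xd) rsm ^ p ≤ CtQ * ((K2 + K3) * ω) := by
    have h := hQt rsm
    rw [← hBdef] at h
    have h2 : Rc (Ip (rinv rsm)) - Rc xd - ξ (Ip (rinv rsm) - xd) + ψ (CP * B ^ p)
        ≤ (K2 + K3) * ω := by linarith
    calc Q (r xd) rsm ^ p ≤ CtQ * (Rc (Ip (rinv rsm)) - Rc xd - ξ (Ip (rinv rsm) - xd)
          + ψ (CP * B ^ p)) := by linarith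
      _ ≤ CtQ * ((K2 + K3) * ω) := mul_le_mul_of_nonneg_left h2 hCtQ.le
  -- comparison of Jβ at xd
  have hsm : β * Q (r xsm) rsm ^ p + ‖P xsm‖ ^ p ≤ β * (CtQ * ((K2 + K3) * ω)) + η := by
    have h := hmin2 xd hxdU
    rw [hJβ rsm xsm, hJβ rsm xd, hPxd, norm_zero, Real.zero_rpow (by positivity : p ≠ 0)] at h
    have := mul_le_mul_of_nonneg_left hQxd hβ.le
    linarith
  have hηω : η ≤ Cη * (β * ω / τl) := by
    have h1 : Cη * δ ^ p ≤ Cη * (α * ω / τl) := mul_le_mul_of_nonneg_left hδp hCη.le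
    have h2 : α * ω ≤ β * ω := mul_le_mul_of_nonneg_right hαβ hω0
    have h3 : Cη * (α * ω / τl) ≤ Cη * (β * ω / τl) :=
      mul_le_mul_of_nonneg_left ((div_le_div_iff_of_pos_right hτl).mpr h2) hCη.le
    linarith
  have hQsmnn : (0:ℝ) ≤ Q (r xsm) rsm ^ p := Real.rpow_nonneg (hQnn _ _) p
  have hPxsmnn : (0:ℝ) ≤ ‖P xsm‖ ^ p := Real.rpow_nonneg (norm_nonneg _) p
  have hβK6 : β * (K6 * ω) = β * (CtQ * ((K2 + K3) * ω)) + Cη * (β * ω / τl) := by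
    rw [hK6def]; field_simp
  have hPxsm : ‖P xsm‖ ^ p ≤ β * K6 * ω := by
    have h0 : β * Q (r xsm) rsm ^ p ≥ 0 := mul_nonneg hβ.le hQsmnn
    have : β * K6 * ω = β * (CtQ * ((K2 + K3) * ω)) + Cη * (β * ω / τl) := by
      rw [← hβK6]; ring
    rw [this]
    linarith [hsm, hηω, h0]
  have hQsm : Q (r xsm) rsm ^ p ≤ K6 * ω := by
    have h1 : β * Q (r xsm) rsm ^ p ≤ β * (K6 * ω) := by
      rw [hβK6]
      linarith [hsm, hηω, hPxsmnn]
    exact (mul_le_mul_iff_of_pos_left hβ).mp h1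
  -- the three norm bounds
  have hn1 : ‖P xsm‖ ≤ (β * K6) ^ (1/p) * ω ^ (1/p) := by
    have h := aux_rpow_le (norm_nonneg (P xsm)) hp (by linarith [hPxsm] : ‖P xsm‖ ^ p ≤ (β * K6) * ω)
    rwa [Real.mul_rpow (mul_pos hβ hK6).le hω0] at h
  have hn2 : ‖Ip xsm - Ip (rinv rsm)‖ ≤ (CbarQ * K6) ^ (1/s) * ω ^ (1/s) := by
    have h := hQbar1 (r xsm) rsm
    rw [hrleft xsm hxsmU] at h
    have h2 : ‖Ip (rinv rsm) - Ip xsm‖ ^ s ≤ (CbarQ * K6) * ω := by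
      have hq := mul_le_mul_of_nonneg_left hQsm hCbarQ.le
      have he : CbarQ * (K6 * ω) = (CbarQ * K6) * ω := by ring
      linarith
    have h3 := aux_rpow_le (norm_nonneg _) hs h2
    rw [norm_sub_rev]
    rwa [Real.mul_rpow (mul_pos hCbarQ hK6).le hω0] at h3
  have hn3 : ‖Ip (rinv rsm) - xd‖ ≤ (K2 / cs) ^ (1/s) * ω ^ (1/s) := by
    have h := hsconv (Ip (rinv rsm)) hxcXc
    have h2 : ‖Ip (rinv rsm) - xd‖ ^ s ≤ (K2 / cs) * ω := by
      rw [div_mul_eq_mul_div, le_div_iff₀ hcs]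
      linarith [h, hΔK]
    have h3 := aux_rpow_le (norm_nonneg _) hs h2
    rwa [Real.mul_rpow (div_pos hK2 hcs).le hω0] at h3
  -- triangle inequality
  have hdecomp : xsm - xd = P xsm + (Ip xsm - Ip (rinv rsm)) + (Ip (rinv rsm) - xd) := by
    rw [hPIp xsm]; abel
  have htri : ‖xsm - xd‖ ≤ ‖P xsm‖ + ‖Ip xsm - Ip (rinv rsm)‖ + ‖Ip (rinv rsm) - xd‖ := by
    rw [hdecomp]; exact norm_add₃_le
  -- conclude
  have hωs := Real.rpow_nonneg hω0 (1/s)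
  have hωp := Real.rpow_nonneg hω0 (1/p)
  have htp := Real.rpow_nonneg ht (1/p)
  have c1 := Real.rpow_pos_of_pos (div_pos hK2 hcs) (1/s)
  have c2 := Real.rpow_pos_of_pos (mul_pos hCbarQ hK6) (1/s)
  have c3 := Real.rpow_pos_of_pos (mul_pos hβ hK6) (1/p)
  set C' : ℝ := (K2/cs) ^ (1/s) + (CbarQ*K6) ^ (1/s) + (β*K6) ^ (1/p) with hC'def
  have hb1' : ((CbarQ*K6) ^ (1/s) + (K2/cs) ^ (1/s)) * ω ^ (1/s) ≤ C' * ω ^ (1/s) :=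
    mul_le_mul_of_nonneg_right (by rw [hC'def]; linarith) hωs
  have hb2' : (β*K6) ^ (1/p) * ω ^ (1/p) ≤ C' * ω ^ (1/p) :=
    mul_le_mul_of_nonneg_right (by rw [hC'def]; linarith) hωp
  have hb3' : 0 ≤ C' * t ^ (1/p) := mul_nonneg (by rw [hC'def]; linarith) htp
  linarith [htri, hn1, hn2, hn3, hb1', hb2', hb3']
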